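/- Let E and F be commutative unitary rings and h : E → F a ring homomorphism such that the induced map from the total ring of fractions Q(E) (localization of E at its set Z(E) of non-zerodivisors) to the localization F_{Z(E)} is an isomorphism. Then the map Hom_E(F, E) → E sending φ to φ(1) is injective. -/

import Mathlib

/-- If `E → F` is a ring homomorphism such that the induced map from the total ring of
fractions `Q(E)` (localization at the non-zerodivisors `Z(E)`) to the localization of `F`
at (the image of) `Z(E)` is an isomorphism, then `Hom_E(F, E) → E`, `φ ↦ φ 1`,
is injective. -/
theorem stmt_0 (E F : Type*) [CommRing E] [CommRing F] [Algebra E F]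
    (hbij : Function.Bijective
      (IsLocalization.map
          (Localization (Submonoid.map (algebraMap E F) (nonZeroDivisors E)))
          (algebraMap E F) (Submonoid.le_comap_map (nonZeroDivisors E)) :
        Localization (nonZeroDivisors E) →+*
          Localization (Submonoid.map (algebraMap E F) (nonZeroDivisors E)))) :
    Function.Injective (fun φ : F →ₗ[E] E => φ 1) := by
  set M := Submonoid.map (algebraMap E F) (nonZeroDivisors E) with hM
  have key : ∀ χ : F →ₗ[E] E, χ 1 = 0 → ∀ f : F, χ f = 0 := by
    intro χ h1 f
    obtain ⟨y, hy⟩ := hbij.2 (algebraMap F (Localization M) f)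
    obtain ⟨⟨a, s⟩, rfl⟩ := IsLocalization.mk'_surjective (nonZeroDivisors E) y
    rw [IsLocalization.map_mk'] at hy
    rw [IsLocalization.mk'_eq_iff_eq_mul] at hy
    rw [← map_mul] at hy
    obtain ⟨⟨c, ⟨u, hu, rfl⟩⟩, hc⟩ := (IsLocalization.eq_iff_exists M _).mp hy
    simp only at hc
    -- hc : algebraMap E F u * algebraMap E F a = algebraMap E F u * (f * algebraMap E F s)
    have h2 : (u * a) • (1 : F) = (u * s) • f := by
      rw [Algebra.smul_def, Algebra.smul_def, map_mul, map_mul, mul_one]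
      rw [hc]; ring
    have h3 := congrArg χ h2
    rw [map_smul, map_smul, h1, smul_zero, smul_eq_mul] at h3
    have huz : u * s.1 ∈ nonZeroDivisors E := mul_mem hu s.2
    exact huz.2 _ (by rw [mul_comm]; exact h3.symm)
  intro φ ψ hφψ
  simp only at hφψ
  ext f
  have h0 : (φ - ψ) 1 = 0 := by simp [hφψ]
  have := key (φ - ψ) h0 f
  simp only [LinearMap.sub_apply, sub_eq_zero] at this
  exact this
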